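/- (Normalizing converter nbe from lambda terms to compact terms.) There is a function which, for every formula F, maps every closed intrinsically typed lambda term of type ND [] F to a compact term of the exp-log normal form of F, i.e., a function nbe : ND [] F → HSc (enf2cnf (enf F)), where enf2cnf coerces an ENF to a CNF (the identity on cnf c, and con top (bd d) top on dnf d). -/
import Mathlib


namespace ExpLog

-- Formulas (types) generated by atoms, sums, products and arrows.
inductive Formula : Type
  | prop : ℕ → Formula
  | disj : Formula → Formula → Formula
  | conj : Formula → Formula → Formula
  | impl : Formula → Formula → Formula
  deriving Repr
-- Intrinsically typed lambda terms (natural deduction proofs) with de Bruijn indices.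
inductive ND : List Formula → Formula → Type
  | hyp  {Γ A} : ND (A :: Γ) A
  | wkn  {Γ A B} : ND Γ A → ND (B :: Γ) A
  | lam  {Γ A B} : ND (A :: Γ) B → ND Γ (.impl A B)
  | app  {Γ A B} : ND Γ (.impl A B) → ND Γ A → ND Γ B
  | pair {Γ A B} : ND Γ A → ND Γ B → ND Γ (.conj A B)
  | fst  {Γ A B} : ND Γ (.conj A B) → ND Γ A
  | snd  {Γ A B} : ND Γ (.conj A B) → ND Γ B
  | inl  {Γ A B} : ND Γ A → ND Γ (.disj A B)
  | inr  {Γ A B} : ND Γ B → ND Γ (.disj A B)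
  | cas  {Γ A B C} : ND Γ (.disj A B) → ND (A :: Γ) C → ND (B :: Γ) C → ND Γ C
-- The mutually inductive grammar of exp-log normal forms:
-- conjunctive normal forms (CNF), disjunctive normal forms (DNF), and base types.
mutual
inductive CNF : Type
  | top : CNF
  | con : CNF → Base → CNF → CNF
  deriving Repr

inductive DNF : Type
  | two : CNF → CNF → DNF
  | dis : CNF → DNF → DNF
  deriving Repr

inductive Base : Type
  | prp : ℕ → Base
  | bd  : DNF → Base
  deriving Repr
end

/-- Exp-log normal forms: either a CNF or a DNF. -/
inductive ENF : Type
  | cnf : CNF → ENF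
  | dnf : DNF → ENF
  deriving Repr

/-- Flattening of `+`-associativity (auxiliary). -/
def nplus1 : DNF → ENF → DNF
  | .two c c0, .cnf c1 => .dis c (.two c0 c1)
  | .two c c0, .dnf d0 => .dis c (.dis c0 d0)
  | .dis c d0, e2 => .dis c (nplus1 d0 e2)

/-- Flattened n-ary sum of two ENFs. -/
def nplus : ENF → ENF → DNF
  | .cnf a, .cnf c => .two a c
  | .cnf a, .dnf d => .dis a d
  | .dnf b, e2 => nplus1 b e2

/-- Flattened n-ary product of two CNFs. -/
def ntimes : CNF → CNF → CNF
  | .top, c2 => c2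
  | .con c10 d c13, c2 => .con c10 d (ntimes c13 c2)

/-- Distributivity of a CNF over a DNF. -/
def distrib0 : CNF → DNF → ENF
  | c, .two c0 c1 => .dnf (.two (ntimes c c0) (ntimes c c1))
  | c, .dis c0 d0 =>
      .dnf (match distrib0 c d0 with
            | .cnf c1 => .two (ntimes c c0) c1
            | .dnf d1 => .dis (ntimes c c0) d1)

/-- Distributivity of a CNF over an ENF. -/
def distrib1 : CNF → ENF → ENF
  | c, .cnf a => .cnf (ntimes c a)
  | c, .dnf b => distrib0 c b

/-- The exp-log rewriting `b^(c₁+⋯+cₙ) ⇝ b^c₁ ⋯ b^cₙ`. -/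
def explog0 : Base → DNF → CNF
  | b, .two c1 c2 => ntimes (.con c1 b .top) (.con c2 b .top)
  | b, .dis c d3 => ntimes (.con c b .top) (explog0 b d3)

/-- The exp-log rewriting of `b^e` for an ENF exponent `e`. -/
def explog1 : Base → ENF → CNF
  | d, .cnf c => .con c d .top
  | d, .dnf d1 => explog0 d d1

/-- Distributivity of a DNF over an ENF. -/
def distribn : DNF → ENF → ENF
  | .two c c0, e2 => .dnf (nplus (distrib1 c e2) (distrib1 c0 e2))
  | .dis c d0, e2 => .dnf (nplus (distrib1 c e2) (distribn d0 e2))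

/-- Distributivity of an ENF over an ENF. -/
def distrib : ENF → ENF → ENF
  | .cnf a, e2 => distrib1 a e2
  | .dnf b, e2 => distribn b e2

/-- The exp-log rewriting of `c^{e₂}` (pointwise currying). -/
def explogn : CNF → ENF → CNF
  | .top, _ => .top
  | .con c1 d c2, e2 => ntimes (explog1 d (distrib1 c1 e2)) (explogn c2 e2)

/-- The CNF corresponding to an atomic type: `(1→p)×1`, identified with `p`. -/
def p2c (p : ℕ) : CNF := .con .top (.prp p) .top

def b2c : Base → CNF
  | .prp p => p2c p
  | .bd d => .con .top (.bd d) .top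

/-- Coercion of an ENF to a CNF. -/
def enf2cnf : ENF → CNF
  | .cnf c => c
  | .dnf d => b2c (.bd d)
/-- The structurally recursive exp-log normalization of a formula. -/
def enf : Formula → ENF
  | .prop p => .cnf (p2c p)
  | .disj f0 f1 => .dnf (nplus (enf f0) (enf f1))
  | .conj f0 f1 => distrib (enf f0) (enf f1)
  | .impl f0 f1 => .cnf (explogn (enf2cnf (enf f1)) (enf f0))
-- The intrinsically typed compact terms: HSc (at product/CNF type) and HSb (at base type).
mutual
inductive HSc : CNF → Type
  | tt : HSc .top
  | pair {c1 b c2} : HSb c1 b → HSc c2 → HSc (.con c1 b c2)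

inductive HSb : CNF → Base → Type
  | app {p c0 c1 c2} :
      HSc (explogn c1 (.cnf (ntimes c2 (.con c1 (.prp p) c0)))) →
      HSb (ntimes c2 (.con c1 (.prp p) c0)) (.prp p)
  | cas {d b c0 c1 c2 c3} :
      HSc (explogn c1 (.cnf (ntimes c2 (.con c1 (.bd d) c0)))) →
      HSc (explogn (explog0 b d) (.cnf (ntimes c3 (ntimes c2 (.con c1 (.bd d) c0))))) →
      HSb (ntimes c3 (ntimes c2 (.con c1 (.bd d) c0))) b
  | wkn {c0 c1 b1 b} : HSb c0 b → HSb (.con c1 b1 c0) b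
  | inl_two {c0 c1 c2} : HSc (explogn c1 (.cnf c0)) → HSb c0 (.bd (.two c1 c2))
  | inr_two {c0 c1 c2} : HSc (explogn c2 (.cnf c0)) → HSb c0 (.bd (.two c1 c2))
  | inl_dis {c0 c d} : HSc (explogn c (.cnf c0)) → HSb c0 (.bd (.dis c d))
  | inr_dis {c0 c d} : HSb c0 (.bd d) → HSb c0 (.bd (.dis c d))
end


/-! ### Auxiliary development for NbE -/

theorem ntimes_top : ∀ c : CNF, ntimes c .top = c
  | .top => rfl
  | .con a b c => by simp [ntimes, ntimes_top c]

theorem ntimes_assoc : ∀ a b c : CNF, ntimes (ntimes a b) c = ntimes a (ntimes b c)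
  | .top, _, _ => rfl
  | .con x y z, b, c => by simp [ntimes, ntimes_assoc z b c]

/-- Context extension: `Δ` extends `Γ` by a prefix. -/
def Ext (Δ Γ : CNF) : Type := { w : CNF // ntimes w Γ = Δ }

def Ext.refl (Γ : CNF) : Ext Γ Γ := ⟨.top, rfl⟩

def Ext.trans {Θ Δ Γ : CNF} (h1 : Ext Θ Δ) (h2 : Ext Δ Γ) : Ext Θ Γ :=
  ⟨ntimes h1.1 h2.1, by rw [ntimes_assoc, h2.2, h1.2]⟩

def Ext.pre (w Γ : CNF) : Ext (ntimes w Γ) Γ := ⟨w, rfl⟩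

def wknB' {b : Base} : (w : CNF) → {Γ : CNF} → HSb Γ b → HSb (ntimes w Γ) b
  | .top, _, t => t
  | .con _ _ w', _, t => .wkn (wknB' w' t)

def wknB {b : Base} {Δ Γ : CNF} (e : Ext Δ Γ) (t : HSb Γ b) : HSb Δ b :=
  e.2 ▸ wknB' e.1 t

/-- Membership of a CNF as disjunct of a DNF (Type-valued). -/
inductive DMem : CNF → DNF → Type
  | two1 {a b} : DMem a (.two a b)
  | two2 {a b} : DMem b (.two a b)
  | head {a d} : DMem a (.dis a d)
  | tail {a c d} : DMem c d → DMem c (.dis a d)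

/-- The cover monad: case trees over neutral scrutinees of disjunctive type. -/
inductive Cov (X : CNF → Type) : CNF → Type
  | ret {Γ} : X Γ → Cov X Γ
  | split {Γ c0 c1 c2 c3 : CNF} {d : DNF}
      (eq : ntimes c3 (ntimes c2 (.con c1 (.bd d) c0)) = Γ)
      (args : HSc (explogn c1 (.cnf (ntimes c2 (.con c1 (.bd d) c0)))))
      (k : ∀ ci, DMem ci d → ∀ Δ, Ext Δ Γ → Cov X (ntimes ci Δ)) : Cov X Γ

def covWkn {X : CNF → Type} (mX : ∀ {Δ Γ}, Ext Δ Γ → X Γ → X Δ)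
    {Γ Δ : CNF} (e : Ext Δ Γ) : Cov X Γ → Cov X Δ
  | .ret x => .ret (mX e x)
  | .split (c3 := c3) eq args k =>
      .split (c3 := ntimes e.1 c3)
        (by rw [ntimes_assoc, eq, e.2]) args
        (fun ci m Θ e' => k ci m Θ (e'.trans e))

def covBind {X Y : CNF → Type} {Γ : CNF}
    (t : Cov X Γ) (f : ∀ Δ, Ext Δ Γ → X Δ → Cov Y Δ) : Cov Y Γ :=
  match t with
  | .ret x => f Γ (Ext.refl Γ) x
  | .split eq args k =>
      .split eq args (fun ci m Δ e =>
        covBind (k ci m Δ e) (fun Θ e' y => f Θ (e'.trans ((Ext.pre ci Δ).trans e)) y))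

def covMap {X Y : CNF → Type} {Γ : CNF} (f : ∀ {Δ}, X Δ → Y Δ) (t : Cov X Γ) : Cov Y Γ :=
  covBind t (fun _ _ x => .ret (f x))

-- Semantic values: Kripke semantics of normal-form types.
mutual
def Vc : CNF → CNF → Type
  | .top, _ => PUnit
  | .con c1 b c2, Γ => (∀ Δ, Ext Δ Γ → Vc c1 Δ → Vb b Δ) × Vc c2 Γ
def Vb : Base → CNF → Type
  | .prp p, Γ => HSb Γ (.prp p)
  | .bd d, Γ => Cov (Vd d) Γ
def Vd : DNF → CNF → Type
  | .two a b, Γ => Vc a Γ ⊕ Vc b Γ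
  | .dis a d, Γ => Vc a Γ ⊕ Vd d Γ
end

mutual
def wknVc : (c : CNF) → {Δ Γ : CNF} → Ext Δ Γ → Vc c Γ → Vc c Δ
  | .top, _, _, _, _ => PUnit.unit
  | .con _ _ c2, _, _, e, v => ⟨fun Θ e' => v.1 Θ (e'.trans e), wknVc c2 e v.2⟩
def wknVb : (b : Base) → {Δ Γ : CNF} → Ext Δ Γ → Vb b Γ → Vb b Δ
  | .prp _, _, _, e, v => wknB e v
  | .bd d, _, _, e, v => covWkn (fun e' => wknVd d e') e v
def wknVd : (d : DNF) → {Δ Γ : CNF} → Ext Δ Γ → Vd d Γ → Vd d Δ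
  | .two a b, _, _, e, v => v.elim (fun x => .inl (wknVc a e x)) (fun x => .inr (wknVc b e x))
  | .dis a d, _, _, e, v => v.elim (fun x => .inl (wknVc a e x)) (fun x => .inr (wknVd d e x))
end

def VE : ENF → CNF → Type
  | .cnf c => Vc c
  | .dnf d => Cov (Vd d)

def wknVE : (e : ENF) → {Δ Γ : CNF} → Ext Δ Γ → VE e Γ → VE e Δ
  | .cnf c, _, _, ext, v => wknVc c ext v
  | .dnf d, _, _, ext, v => covWkn (fun e' => wknVd d e') ext v

def mkBranches (b : Base) (Γ : CNF) :
    (d : DNF) → (∀ ci, DMem ci d → HSb (ntimes ci Γ) b) →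
    HSc (explogn (explog0 b d) (.cnf Γ))
  | .two a a', f => .pair (f a .two1) (.pair (f a' .two2) .tt)
  | .dis a d0, f => .pair (f a .head) (mkBranches b Γ d0 (fun ci m => f ci (.tail m)))

def covRunB {X : CNF → Type} {b : Base} (h : ∀ Δ, X Δ → HSb Δ b) :
    {Γ : CNF} → Cov X Γ → HSb Γ b
  | _, .ret x => h _ x
  | Γ, .split (c0 := c0) (c1 := c1) (c2 := c2) (c3 := c3) (d := d) eq args k =>
      eq ▸ HSb.cas args
        (mkBranches b (ntimes c3 (ntimes c2 (.con c1 (.bd d) c0))) d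
          (fun ci m => eq.symm ▸ covRunB h (k ci m Γ (Ext.refl Γ))))

def pasteB : (b : Base) → {Γ : CNF} → Cov (Vb b) Γ → Vb b Γ
  | .prp _, _, t => covRunB (fun _ x => x) t
  | .bd _, _, t => covBind t (fun _ _ x => x)

def pasteC : (c : CNF) → {Γ : CNF} → Cov (Vc c) Γ → Vc c Γ
  | .top, _, _ => PUnit.unit
  | .con c1 b c2, _, t =>
    ⟨fun Δ e v => pasteB b (covBind (covWkn (fun e' => wknVc (.con c1 b c2) e') e t)
        (fun Θ e' p => .ret (p.1 Θ (Ext.refl Θ) (wknVc c1 e' v)))),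
     pasteC c2 (covMap (fun p => p.2) t)⟩

def pasteVE : (e : ENF) → {Γ : CNF} → Cov (VE e) Γ → VE e Γ
  | .cnf c, _, t => pasteC c t
  | .dnf _, _, t => covBind t (fun _ _ x => x)

def injVd : {ci : CNF} → {d : DNF} → DMem ci d → {Γ : CNF} → Vc ci Γ → Vd d Γ
  | _, _, .two1, _, v => .inl v
  | _, _, .two2, _, v => .inr v
  | _, _, .head, _, v => .inl v
  | _, _, .tail m, _, v => .inr (injVd m v)

theorem DMem.size_lt {ci : CNF} {d : DNF} (h : DMem ci d) : sizeOf ci < sizeOf d := by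
  induction h <;> simp <;> omega

mutual
def quoteC : (c : CNF) → {Γ : CNF} → Vc c Γ → HSc (explogn c (.cnf Γ))
  | .top, _, _ => .tt
  | .con c1 b c2, Γ, v =>
      .pair (reifyB b (v.1 (ntimes c1 Γ) (Ext.pre c1 Γ) (reflectC c1 Γ)))
            (quoteC c2 v.2)
  termination_by c => sizeOf c
  decreasing_by
    all_goals simp_wf
    all_goals omega

def reflectC : (c : CNF) → (Γ : CNF) → Vc c (ntimes c Γ)
  | .top, _ => PUnit.unit
  | .con c1 b c2, Γ =>
    ⟨fun Δ e v =>
      match b with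
      | .prp p =>
          (e.2 ▸ (HSb.app (c2 := e.1) (c0 := ntimes c2 Γ)
            (e.2.symm ▸ quoteC c1 v)) : Vb (.prp p) Δ)
      | .bd d =>
          (Cov.split (c3 := .top) (c2 := e.1) (c0 := ntimes c2 Γ) e.2
            (e.2.symm ▸ quoteC c1 v)
            (fun ci m Θ _ => .ret (reflectD d ci m Θ)) : Vb (.bd d) Δ),
     wknVc c2 ⟨.con c1 b .top, rfl⟩ (reflectC c2 Γ)⟩
  termination_by c _ => sizeOf c
  decreasing_by
    all_goals simp_wf
    all_goals omega

def reflectD : (d0 : DNF) → ∀ ci, DMem ci d0 → (Θ : CNF) → Vd d0 (ntimes ci Θ)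
  | .two a _, _, .two1, Θ => .inl (reflectC a Θ)
  | .two _ b', _, .two2, Θ => .inr (reflectC b' Θ)
  | .dis a _, _, .head, Θ => .inl (reflectC a Θ)
  | .dis _ d1, ci, .tail m', Θ => .inr (reflectD d1 ci m' Θ)
  termination_by d0 => sizeOf d0
  decreasing_by
    all_goals simp_wf
    all_goals omega

def reifyB : (b : Base) → {Γ : CNF} → Vb b Γ → HSb Γ b
  | .prp _, _, v => v
  | .bd d, _, v => covRunB (fun _ x => reifyD d x) v
  termination_by b => sizeOf b
  decreasing_by
    all_goals simp_wf
    all_goals omega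

def reifyD : (d : DNF) → {Γ : CNF} → Vd d Γ → HSb Γ (.bd d)
  | .two a a', _, v => v.elim (fun x => .inl_two (quoteC a x)) (fun x => .inr_two (quoteC a' x))
  | .dis a d0, _, v => v.elim (fun x => .inl_dis (quoteC a x)) (fun x => .inr_dis (reifyD d0 x))
  termination_by d => sizeOf d
  decreasing_by
    all_goals simp_wf
    all_goals omega
end

def splitT : (a : CNF) → {b Γ : CNF} → Vc (ntimes a b) Γ → Vc a Γ × Vc b Γ
  | .top, _, _, v => (PUnit.unit, v)
  | .con _ _ a2, _, _, v =>
      let pq := splitT a2 v.2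
      (⟨v.1, pq.1⟩, pq.2)

def mergeT : (a : CNF) → {b Γ : CNF} → Vc a Γ → Vc b Γ → Vc (ntimes a b) Γ
  | .top, _, _, _, w => w
  | .con _ _ a2, _, _, v, w => ⟨v.1, mergeT a2 v.2 w⟩

def e2c : (e : ENF) → {Γ : CNF} → VE e Γ → Vc (enf2cnf e) Γ
  | .cnf _, _, v => v
  | .dnf d, _, v => ⟨fun _ ext _ => covWkn (fun e' => wknVd d e') ext v, PUnit.unit⟩

def c2e : (e : ENF) → {Γ : CNF} → Vc (enf2cnf e) Γ → VE e Γ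
  | .cnf _, _, v => v
  | .dnf _, Γ, v => v.1 Γ (Ext.refl Γ) PUnit.unit

def castVE {e e' : ENF} (h : e = e') {Γ : CNF} (v : VE e Γ) : VE e' Γ := h ▸ v

def distrib0D : CNF → DNF → DNF
  | c, .two c0 c1 => .two (ntimes c c0) (ntimes c c1)
  | c, .dis c0 d0 => .dis (ntimes c c0) (distrib0D c d0)

theorem distrib0_eq : ∀ (c : CNF) (d : DNF), distrib0 c d = .dnf (distrib0D c d)
  | _, .two _ _ => rfl
  | c, .dis c0 d0 => by simp only [distrib0, distrib0D, distrib0_eq c d0]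

def distribnD : DNF → ENF → DNF
  | .two c c0, e2 => nplus (distrib1 c e2) (distrib1 c0 e2)
  | .dis c d0, e2 => nplus (distrib1 c e2) (.dnf (distribnD d0 e2))

theorem distribn_eq : ∀ (d : DNF) (e2 : ENF), distribn d e2 = .dnf (distribnD d e2)
  | .two _ _, _ => rfl
  | .dis c d0, e2 => by simp only [distribn, distribnD, distribn_eq d0 e2, nplus]

def vdInj1 : (d1 : DNF) → (e2 : ENF) → {Γ : CNF} → Vd d1 Γ → Vd (nplus1 d1 e2) Γ
  | .two _ _, .cnf _, _, v => match v with | .inl x => .inl x | .inr x => .inr (.inl x)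
  | .two _ _, .dnf _, _, v => match v with | .inl x => .inl x | .inr x => .inr (.inl x)
  | .dis _ d0, e2, _, v => match v with | .inl x => .inl x | .inr x => .inr (vdInj1 d0 e2 x)

def injE1 : (e1 e2 : ENF) → {Γ : CNF} → VE e1 Γ → Cov (Vd (nplus e1 e2)) Γ
  | .cnf _, .cnf _, _, v => .ret (.inl v)
  | .cnf _, .dnf _, _, v => .ret (.inl v)
  | .dnf d1, e2, _, v => covMap (fun x => vdInj1 d1 e2 x) v

def vdInj2c : (d1 : DNF) → (c1 : CNF) → {Γ : CNF} → Vc c1 Γ → Vd (nplus1 d1 (.cnf c1)) Γ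
  | .two _ _, _, _, v => .inr (.inr v)
  | .dis _ d0, c1, _, v => .inr (vdInj2c d0 c1 v)

def vdInj2d : (d1 d2 : DNF) → {Γ : CNF} → Vd d2 Γ → Vd (nplus1 d1 (.dnf d2)) Γ
  | .two _ _, _, _, v => .inr (.inr v)
  | .dis _ d0, d2, _, v => .inr (vdInj2d d0 d2 v)

def injE2 : (e1 e2 : ENF) → {Γ : CNF} → VE e2 Γ → Cov (Vd (nplus e1 e2)) Γ
  | .cnf _, .cnf _, _, v => .ret (.inr v)
  | .cnf c, .dnf d, _, v => covMap (fun x => (.inr x : Vd (.dis c d) _)) v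
  | .dnf d1, .cnf c1, _, v => .ret (vdInj2c d1 c1 v)
  | .dnf d1, .dnf d2, _, v => covMap (fun x => vdInj2d d1 d2 x) v

def vdElim1 : (d1 : DNF) → (e2 : ENF) → {Γ : CNF} → Vd (nplus1 d1 e2) Γ → Vd d1 Γ ⊕ VE e2 Γ
  | .two _ _, .cnf _, _, v => match v with
     | .inl x => .inl (.inl x) | .inr (.inl x) => .inl (.inr x) | .inr (.inr x) => .inr x
  | .two _ _, .dnf _, _, v => match v with
     | .inl x => .inl (.inl x) | .inr (.inl x) => .inl (.inr x) | .inr (.inr x) => .inr (.ret x)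
  | .dis _ d0, e2, _, v => match v with
     | .inl x => .inl (.inl x)
     | .inr x => match vdElim1 d0 e2 x with | .inl y => .inl (.inr y) | .inr y => .inr y

def plusElim : (e1 e2 : ENF) → {Γ : CNF} → Vd (nplus e1 e2) Γ → VE e1 Γ ⊕ VE e2 Γ
  | .cnf _, .cnf _, _, v => v
  | .cnf _, .dnf _, _, v => match v with | .inl x => .inl x | .inr x => .inr (.ret x)
  | .dnf d1, e2, _, v => match vdElim1 d1 e2 v with
     | .inl x => .inl (.ret x) | .inr y => .inr y

def vdDistrib : (a : CNF) → (d : DNF) → {Γ : CNF} → Vc a Γ → Vd d Γ → Vd (distrib0D a d) Γ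
  | a, .two _ _, _, va, v => match v with
     | .inl x => .inl (mergeT a va x) | .inr x => .inr (mergeT a va x)
  | a, .dis _ d0, _, va, v => match v with
     | .inl x => .inl (mergeT a va x) | .inr x => .inr (vdDistrib a d0 va x)

def vdSplit : (a : CNF) → (d : DNF) → {Γ : CNF} → Vd (distrib0D a d) Γ → Vc a Γ × Vd d Γ
  | a, .two _ _, _, v => match v with
     | .inl x => ((splitT a x).1, .inl (splitT a x).2)
     | .inr x => ((splitT a x).1, .inr (splitT a x).2)
  | a, .dis _ d0, _, v => match v with
     | .inl x => ((splitT a x).1, .inl (splitT a x).2)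
     | .inr x => ((vdSplit a d0 x).1, .inr (vdSplit a d0 x).2)

def distrib1Fwd : (a : CNF) → (e2 : ENF) → {Γ : CNF} → Vc a Γ → VE e2 Γ → VE (distrib1 a e2) Γ
  | a, .cnf _, _, va, v => mergeT a va v
  | a, .dnf d, Γ, va, v =>
      castVE (distrib0_eq a d).symm
        ((covBind v (fun _ ext x => .ret (vdDistrib a d (wknVc a ext va) x)) :
          Cov (Vd (distrib0D a d)) Γ) : VE (.dnf (distrib0D a d)) Γ)

def distrib1Elim : (a : CNF) → (e2 : ENF) → {Γ : CNF} → VE (distrib1 a e2) Γ → Vc a Γ × VE e2 Γ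
  | a, .cnf _, _, v => splitT a v
  | a, .dnf d, Γ, v =>
      let w : Cov (Vd (distrib0D a d)) Γ := castVE (distrib0_eq a d) v
      (pasteC a (covMap (fun x => (vdSplit a d x).1) w),
       covMap (fun x => (vdSplit a d x).2) w)

def vdistribnFwd : (d1 : DNF) → (e2 : ENF) → {Γ : CNF} → Vd d1 Γ → VE e2 Γ →
    Cov (Vd (distribnD d1 e2)) Γ
  | .two c c0, e2, _, v, ve => match v with
     | .inl x => injE1 (distrib1 c e2) (distrib1 c0 e2) (distrib1Fwd c e2 x ve)
     | .inr x => injE2 (distrib1 c e2) (distrib1 c0 e2) (distrib1Fwd c0 e2 x ve)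
  | .dis c d0, e2, _, v, ve => match v with
     | .inl x => injE1 (distrib1 c e2) (.dnf (distribnD d0 e2)) (distrib1Fwd c e2 x ve)
     | .inr x => injE2 (distrib1 c e2) (.dnf (distribnD d0 e2)) (vdistribnFwd d0 e2 x ve)

def vdElimN : (d1 : DNF) → (e2 : ENF) → {Γ : CNF} → Vd (distribnD d1 e2) Γ →
    Cov (fun Θ => Vd d1 Θ × VE e2 Θ) Γ
  | .two c c0, e2, _, v => match plusElim (distrib1 c e2) (distrib1 c0 e2) v with
     | .inl x => .ret (.inl (distrib1Elim c e2 x).1, (distrib1Elim c e2 x).2)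
     | .inr x => .ret (.inr (distrib1Elim c0 e2 x).1, (distrib1Elim c0 e2 x).2)
  | .dis c d0, e2, _, v => match plusElim (distrib1 c e2) (.dnf (distribnD d0 e2)) v with
     | .inl x => .ret (.inl (distrib1Elim c e2 x).1, (distrib1Elim c e2 x).2)
     | .inr x => covBind x (fun _ _ y =>
         covMap (fun pq => (.inr pq.1, pq.2)) (vdElimN d0 e2 y))

def prodIntro : (e1 e2 : ENF) → {Γ : CNF} → VE e1 Γ → VE e2 Γ → VE (distrib e1 e2) Γ
  | .cnf a, e2, _, v, w => distrib1Fwd a e2 v w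
  | .dnf d1, e2, Γ, v, w =>
      castVE (distribn_eq d1 e2).symm
        ((covBind v (fun _ ext x => vdistribnFwd d1 e2 x (wknVE e2 ext w)) :
          Cov (Vd (distribnD d1 e2)) Γ) : VE (.dnf (distribnD d1 e2)) Γ)

def prodElim : (e1 e2 : ENF) → {Γ : CNF} → VE (distrib e1 e2) Γ → VE e1 Γ × VE e2 Γ
  | .cnf a, e2, _, v => distrib1Elim a e2 v
  | .dnf d1, e2, Γ, v =>
      let w : Cov (fun Θ => Vd d1 Θ × VE e2 Θ) Γ :=
        covBind (castVE (distribn_eq d1 e2) v : Cov (Vd (distribnD d1 e2)) Γ)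
          (fun _ _ x => vdElimN d1 e2 x)
      (covMap (fun pq => pq.1) w, pasteVE e2 (covMap (fun pq => pq.2) w))

def explog0Intro : (b : Base) → (d : DNF) → {Γ : CNF} →
    (∀ Δ, Ext Δ Γ → Vd d Δ → Vb b Δ) → Vc (explog0 b d) Γ
  | _, .two _ _, _, g =>
      ⟨fun Δ e v => g Δ e (.inl v), ⟨fun Δ e v => g Δ e (.inr v), PUnit.unit⟩⟩
  | b, .dis _ d0, _, g =>
      ⟨fun Δ e v => g Δ e (.inl v), explog0Intro b d0 (fun Δ e v => g Δ e (.inr v))⟩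

def explogIntro : (b : Base) → (e : ENF) → {Γ : CNF} →
    (∀ Δ, Ext Δ Γ → VE e Δ → Vb b Δ) → Vc (explog1 b e) Γ
  | _, .cnf _, _, g => ⟨fun Δ e v => g Δ e v, PUnit.unit⟩
  | b, .dnf d, _, g => explog0Intro b d (fun Δ e v => g Δ e (.ret v))

def explog0Elim : (b : Base) → (d : DNF) → {Γ : CNF} → Vc (explog0 b d) Γ →
    ∀ Δ, Ext Δ Γ → Vd d Δ → Vb b Δ
  | _, .two _ _, _, f, Δ, e, v => match v with
     | .inl x => f.1 Δ e x | .inr x => f.2.1 Δ e x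
  | b, .dis _ d0, _, f, Δ, e, v => match v with
     | .inl x => f.1 Δ e x | .inr x => explog0Elim b d0 f.2 Δ e x

def explogElim : (b : Base) → (e : ENF) → {Γ : CNF} → Vc (explog1 b e) Γ →
    ∀ Δ, Ext Δ Γ → VE e Δ → Vb b Δ
  | _, .cnf _, _, f, Δ, e, v => f.1 Δ e v
  | b, .dnf d, _, f, Δ, e, v =>
      pasteB b (covBind v (fun Θ e' x => .ret (explog0Elim b d f Θ (e'.trans e) x)))

def curryIntro : (c : CNF) → (e : ENF) → {Γ : CNF} →
    (∀ Δ, Ext Δ Γ → VE e Δ → Vc c Δ) → Vc (explogn c e) Γ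
  | .top, _, _, _ => PUnit.unit
  | .con c1 b c2, e, _, h =>
      mergeT (explog1 b (distrib1 c1 e))
        (explogIntro b (distrib1 c1 e) (fun Δ ext v' =>
           (h Δ ext (distrib1Elim c1 e v').2).1 Δ (Ext.refl Δ) (distrib1Elim c1 e v').1))
        (curryIntro c2 e (fun Δ ext v => (h Δ ext v).2))

def curryElim : (c : CNF) → (e : ENF) → {Γ : CNF} → Vc (explogn c e) Γ →
    ∀ Δ, Ext Δ Γ → VE e Δ → Vc c Δ
  | .top, _, _, _, _, _, _ => PUnit.unit
  | .con c1 b c2, e, _, f, Δ, ext, ve =>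
      ⟨fun Θ ext' v1 =>
         explogElim b (distrib1 c1 e) (splitT (explog1 b (distrib1 c1 e)) f).1 Θ
           (ext'.trans ext) (distrib1Fwd c1 e v1 (wknVE e ext' ve)),
       curryElim c2 e (splitT (explog1 b (distrib1 c1 e)) f).2 Δ ext ve⟩

def Env : List Formula → CNF → Type
  | [], _ => PUnit
  | A :: L, Γ => VE (enf A) Γ × Env L Γ

def wknEnv : (L : List Formula) → {Δ Γ : CNF} → Ext Δ Γ → Env L Γ → Env L Δ
  | [], _, _, _, _ => PUnit.unit
  | A :: L, _, _, e, env => (wknVE (enf A) e env.1, wknEnv L e env.2)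

def eval : {L : List Formula} → {F : Formula} → ND L F → {Γ : CNF} → Env L Γ → VE (enf F) Γ
  | _, _, .hyp, _, env => env.1
  | _, _, .wkn t, _, env => eval t env.2
  | _, _, .lam (A := A) (B := B) t, _, env =>
      curryIntro (enf2cnf (enf B)) (enf A)
        (fun _ ext a => e2c (enf B) (eval t (a, wknEnv _ ext env)))
  | _, _, .app (A := A) (B := B) t u, Γ, env =>
      c2e (enf B) (curryElim (enf2cnf (enf B)) (enf A) (eval t env) Γ (Ext.refl Γ) (eval u env))
  | _, _, .pair t u, _, env => prodIntro _ _ (eval t env) (eval u env)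
  | _, _, .fst t, _, env => (prodElim _ _ (eval t env)).1
  | _, _, .snd t, _, env => (prodElim _ _ (eval t env)).2
  | _, _, .inl (A := A) (B := B) t, _, env => injE1 (enf A) (enf B) (eval t env)
  | _, _, .inr (A := A) (B := B) t, _, env => injE2 (enf A) (enf B) (eval t env)
  | _, _, .cas (A := A) (B := B) (C := C) t u1 u2, _, env =>
      pasteVE (enf C) (covBind (eval t env) (fun _ ext x =>
        match plusElim (enf A) (enf B) x with
        | .inl a => .ret (eval u1 (a, wknEnv _ ext env))
        | .inr b => .ret (eval u2 (b, wknEnv _ ext env))))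

theorem explogn_top : ∀ c : CNF, explogn c (.cnf .top) = c
  | .top => rfl
  | .con c1 b c2 => by
      simp [explogn, distrib1, explog1, ntimes, ntimes_top, explogn_top c2]

def nbe (F : Formula) (t : ND [] F) : HSc (enf2cnf (enf F)) :=
  explogn_top (enf2cnf (enf F)) ▸
    quoteC (enf2cnf (enf F)) (e2c (enf F) (eval t (Γ := .top) PUnit.unit))

/-- The normalizing converter `nbe`: every closed lambda term
of type `F` can be mapped to a compact term at the exp-log normal form of `F`. -/
theorem nbe_exists :
    Nonempty (∀ F : Formula, ND [] F → HSc (enf2cnf (enf F))) := by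
  exact ⟨fun F t => nbe F t⟩

end ExpLog
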